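/- Let (α₁,α₂,α₃) ∈ ℂ³ be strongly non-resonant and let a, b, c ∈ R have no common non-unit divisor (every d ∈ R dividing a, b and c is a unit). Assume the tangency condition α₁x₁a + α₂x₂b + α₃x₃c = 0 and the integrability condition a(∂₂c − ∂₃b) + b(∂₃a − ∂₁c) + c(∂₁b − ∂₂a) = 0. Then a divides X(a), b divides X(b), and c divides X(c) in R. -/

import Mathlib

open MvPowerSeries

/-- A triple `(α₁, α₂, α₃) ∈ ℂ³` is strongly non-resonant if the only integers
`ℓ₁, ℓ₂, ℓ₃ ∈ ℤ` with `ℓ₁α₁ + ℓ₂α₂ + ℓ₃α₃ = 0` are `ℓ₁ = ℓ₂ = ℓ₃ = 0`. -/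
def StronglyNonResonant (α₁ α₂ α₃ : ℂ) : Prop :=
  ∀ l₁ l₂ l₃ : ℤ, (l₁ : ℂ) * α₁ + (l₂ : ℂ) * α₂ + (l₃ : ℂ) * α₃ = 0 →
    l₁ = 0 ∧ l₂ = 0 ∧ l₃ = 0

/-- Formal partial derivative `∂ᵢ` on multivariate formal power series. -/
noncomputable def pd {n : ℕ} (i : Fin n) (f : MvPowerSeries (Fin n) ℂ) :
    MvPowerSeries (Fin n) ℂ :=
  fun m => ((m i : ℂ) + 1) * MvPowerSeries.coeff (R := ℂ) (m + Finsupp.single i 1) f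

/-- The derivation `X(f) = α₁x₁∂₁f + α₂x₂∂₂f + α₃x₃∂₃f` on `ℂ⟦x₁,x₂,x₃⟧`. -/
noncomputable def Xder (α₁ α₂ α₃ : ℂ) (f : MvPowerSeries (Fin 3) ℂ) :
    MvPowerSeries (Fin 3) ℂ :=
  C (σ := Fin 3) (R := ℂ) α₁ * X 0 * pd 0 f + C (σ := Fin 3) (R := ℂ) α₂ * X 1 * pd 1 f
    + C (σ := Fin 3) (R := ℂ) α₃ * X 2 * pd 2 f

namespace AuxNR

abbrev R3 := MvPowerSeries (Fin 3) ℂ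

/-- lexicographic strict order on exponents -/
def lt3 (m n : Fin 3 →₀ ℕ) : Prop :=
  m 0 < n 0 ∨ (m 0 = n 0 ∧ (m 1 < n 1 ∨ (m 1 = n 1 ∧ m 2 < n 2)))

lemma eq3 {m n : Fin 3 →₀ ℕ} (h0 : m 0 = n 0) (h1 : m 1 = n 1) (h2 : m 2 = n 2) :
    m = n := by
  apply Finsupp.ext
  intro i
  fin_cases i
  · exact h0
  · exact h1
  · exact h2

lemma sum_apply3 {j k m n : Fin 3 →₀ ℕ} (h : j + k = m + n) (i : Fin 3) :
    j i + k i = m i + n i := by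
  rw [← Finsupp.add_apply, ← Finsupp.add_apply, h]

lemma lt3_resolve {j k m n : Fin 3 →₀ ℕ} (hsum : j + k = m + n)
    (h1 : ¬ lt3 j m) (h2 : ¬ lt3 k n) : j = m ∧ k = n := by
  have e0 := sum_apply3 hsum 0
  have e1 := sum_apply3 hsum 1
  have e2 := sum_apply3 hsum 2
  unfold lt3 at h1 h2
  constructor
  · exact eq3 (by omega) (by omega) (by omega)
  · exact eq3 (by omega) (by omega) (by omega)

lemma exists_min3 (S : Set (Fin 3 →₀ ℕ)) (h : S.Nonempty) :
    ∃ m ∈ S, ∀ j ∈ S, ¬ lt3 j m := by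
  obtain ⟨w, hw⟩ := h
  set T0 : Set ℕ := {p | ∃ m ∈ S, m 0 = p} with hT0def
  have hT0 : T0.Nonempty := ⟨w 0, w, hw, rfl⟩
  obtain ⟨m0, hm0S, hm0⟩ : ∃ m ∈ S, m 0 = sInf T0 := Nat.sInf_mem hT0
  set T1 : Set ℕ := {p | ∃ m ∈ S, m 0 = sInf T0 ∧ m 1 = p} with hT1def
  have hT1 : T1.Nonempty := ⟨m0 1, m0, hm0S, hm0, rfl⟩
  obtain ⟨m1, hm1S, hm1a, hm1b⟩ : ∃ m ∈ S, m 0 = sInf T0 ∧ m 1 = sInf T1 := Nat.sInf_mem hT1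
  set T2 : Set ℕ := {p | ∃ m ∈ S, m 0 = sInf T0 ∧ m 1 = sInf T1 ∧ m 2 = p} with hT2def
  have hT2 : T2.Nonempty := ⟨m1 2, m1, hm1S, hm1a, hm1b, rfl⟩
  obtain ⟨m, hmS, hma, hmb, hmc⟩ :
      ∃ m ∈ S, m 0 = sInf T0 ∧ m 1 = sInf T1 ∧ m 2 = sInf T2 := Nat.sInf_mem hT2
  refine ⟨m, hmS, ?_⟩
  intro j hj hlt
  rcases hlt with h | ⟨he0, h⟩
  · have : sInf T0 ≤ j 0 := Nat.sInf_le ⟨j, hj, rfl⟩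
    omega
  · have hj0 : j 0 = sInf T0 := by omega
    rcases h with h | ⟨he1, h⟩
    · have : sInf T1 ≤ j 1 := Nat.sInf_le ⟨j, hj, hj0, rfl⟩
      omega
    · have hj1 : j 1 = sInf T1 := by omega
      have : sInf T2 ≤ j 2 := Nat.sInf_le ⟨j, hj, hj0, hj1, rfl⟩
      omega

lemma coeff_mul_single (g h : R3) (m n : Fin 3 →₀ ℕ)
    (H : ∀ j k, j + k = m + n → coeff (R := ℂ) j g ≠ 0 → coeff (R := ℂ) k h ≠ 0 → j = m) :
    coeff (R := ℂ) (m + n) (g * h) = coeff (R := ℂ) m g * coeff (R := ℂ) n h := by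
  classical
  rw [MvPowerSeries.coeff_mul]
  apply Finset.sum_eq_single_of_mem (m, n)
  · rw [Finset.HasAntidiagonal.mem_antidiagonal]
  · rintro ⟨j, k⟩ hjk hne
    rw [Finset.HasAntidiagonal.mem_antidiagonal] at hjk
    by_contra hz
    have hg : coeff (R := ℂ) j g ≠ 0 := left_ne_zero_of_mul hz
    have hh : coeff (R := ℂ) k h ≠ 0 := right_ne_zero_of_mul hz
    have hj : j = m := H j k hjk hg hh
    subst hj
    have : j + k = j + n := by rw [hjk]
    exact hne (by rw [add_left_cancel this])

lemma exists_coeff_ne_zero {f : R3} (hf : f ≠ 0) : ∃ m, coeff (R := ℂ) m f ≠ 0 := by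
  by_contra h
  push_neg at h
  exact hf (MvPowerSeries.ext fun m => by rw [h m, map_zero])

noncomputable def lam (α₁ α₂ α₃ : ℂ) (m : Fin 3 →₀ ℕ) : ℂ :=
  (m 0 : ℂ) * α₁ + (m 1 : ℂ) * α₂ + (m 2 : ℂ) * α₃

lemma lam_add (α₁ α₂ α₃ : ℂ) (m n : Fin 3 →₀ ℕ) :
    lam α₁ α₂ α₃ (m + n) = lam α₁ α₂ α₃ m + lam α₁ α₂ α₃ n := by
  simp only [lam, Finsupp.add_apply]
  push_cast
  ring

lemma coeff_pd (i : Fin 3) (f : R3) (m : Fin 3 →₀ ℕ) :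
    coeff (R := ℂ) m (pd i f) = ((m i : ℂ) + 1) * coeff (R := ℂ) (m + Finsupp.single i 1) f := rfl

lemma sub_add_single {m : Fin 3 →₀ ℕ} {i : Fin 3} (h : m i ≠ 0) :
    m - Finsupp.single i 1 + Finsupp.single i 1 = m := by
  apply Finsupp.ext
  intro j
  rw [Finsupp.add_apply, Finsupp.tsub_apply]
  rcases eq_or_ne i j with rfl | hij
  · rw [Finsupp.single_eq_same]; omega
  · rw [Finsupp.single_eq_of_ne' hij]; omega

lemma coeff_X_mul' (i : Fin 3) (f : R3) (m : Fin 3 →₀ ℕ) :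
    coeff (R := ℂ) m (X i * f) = if m i = 0 then 0 else coeff (R := ℂ) (m - Finsupp.single i 1) f := by
  rw [MvPowerSeries.X_def, MvPowerSeries.coeff_monomial_mul]
  rcases eq_or_ne (m i) 0 with h | h
  · rw [if_neg, if_pos h]
    intro hle
    have := hle i
    rw [Finsupp.single_eq_same] at this
    omega
  · rw [if_pos, if_neg h, one_mul]
    intro j
    rcases eq_or_ne i j with rfl | hij
    · rw [Finsupp.single_eq_same]; omega
    · rw [Finsupp.single_eq_of_ne' hij]; omega

lemma coeff_Xder (α₁ α₂ α₃ : ℂ) (f : R3) (m : Fin 3 →₀ ℕ) :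
    coeff (R := ℂ) m (Xder α₁ α₂ α₃ f) = lam α₁ α₂ α₃ m * coeff (R := ℂ) m f := by
  have key : ∀ (i : Fin 3) (α : ℂ),
      coeff (R := ℂ) m (C (σ := Fin 3) (R := ℂ) α * X i * pd i f) = α * (m i : ℂ) * coeff (R := ℂ) m f := by
    intro i α
    rw [mul_assoc, MvPowerSeries.coeff_C_mul, coeff_X_mul']
    rcases eq_or_ne (m i) 0 with h | h
    · rw [if_pos h, h]
      push_cast
      ring
    · rw [if_neg h, coeff_pd, sub_add_single h, Finsupp.tsub_apply, Finsupp.single_eq_same]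
      have : ((m i - 1 : ℕ) : ℂ) + 1 = (m i : ℂ) := by
        have h1 : 1 ≤ m i := by omega
        push_cast [Nat.cast_sub h1]
        ring
      rw [this]
      ring
  rw [Xder, map_add, map_add, key, key, key, lam]
  ring

lemma Xder_zero (α₁ α₂ α₃ : ℂ) : Xder α₁ α₂ α₃ 0 = 0 := by
  apply MvPowerSeries.ext
  intro m
  rw [coeff_Xder, map_zero, mul_zero]

lemma Xder_sub_C_mul (α₁ α₂ α₃ κ : ℂ) (f h : R3) :
    Xder α₁ α₂ α₃ (h - C (σ := Fin 3) (R := ℂ) κ * f)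
      = Xder α₁ α₂ α₃ h - C (σ := Fin 3) (R := ℂ) κ * Xder α₁ α₂ α₃ f := by
  apply MvPowerSeries.ext
  intro m
  rw [coeff_Xder, map_sub, map_sub, MvPowerSeries.coeff_C_mul, MvPowerSeries.coeff_C_mul,
    coeff_Xder, coeff_Xder]
  ring

lemma Xder_mul (α₁ α₂ α₃ : ℂ) (f g : R3) :
    Xder α₁ α₂ α₃ (f * g) = f * Xder α₁ α₂ α₃ g + g * Xder α₁ α₂ α₃ f := by
  classical
  apply MvPowerSeries.ext
  intro m
  rw [coeff_Xder, map_add, mul_comm g (Xder α₁ α₂ α₃ f),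
    MvPowerSeries.coeff_mul, MvPowerSeries.coeff_mul, MvPowerSeries.coeff_mul,
    Finset.mul_sum, ← Finset.sum_add_distrib]
  apply Finset.sum_congr rfl
  rintro ⟨j, k⟩ hjk
  rw [Finset.HasAntidiagonal.mem_antidiagonal] at hjk
  simp only
  rw [coeff_Xder, coeff_Xder, ← hjk, lam_add]
  ring

lemma Xder_X (α₁ α₂ α₃ : ℂ) (i : Fin 3) :
    Xder α₁ α₂ α₃ (X i) = C (σ := Fin 3) (R := ℂ) (lam α₁ α₂ α₃ (Finsupp.single i 1)) * X i := by
  classical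
  apply MvPowerSeries.ext
  intro m
  rw [coeff_Xder, MvPowerSeries.coeff_C_mul, MvPowerSeries.coeff_X]
  split_ifs with hm
  · subst hm; ring
  · ring

lemma lam_single (α₁ α₂ α₃ : ℂ) :
    lam α₁ α₂ α₃ (Finsupp.single 0 1) = α₁
    ∧ lam α₁ α₂ α₃ (Finsupp.single 1 1) = α₂
    ∧ lam α₁ α₂ α₃ (Finsupp.single 2 1) = α₃ := by
  refine ⟨?_, ?_, ?_⟩ <;>
  · rw [lam]
    rw [Finsupp.single_apply, Finsupp.single_apply, Finsupp.single_apply]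
    simp only [show ((0:Fin 3) = 0) = True by simp, show ((0:Fin 3) = 1) = False by decide,
      show ((0:Fin 3) = 2) = False by decide, show ((1:Fin 3) = 0) = False by decide,
      show ((1:Fin 3) = 1) = True by simp, show ((1:Fin 3) = 2) = False by decide,
      show ((2:Fin 3) = 0) = False by decide, show ((2:Fin 3) = 1) = False by decide,
      show ((2:Fin 3) = 2) = True by simp, if_true, if_false]
    push_cast
    ring

lemma Xder_X0 (α₁ α₂ α₃ : ℂ) :
    Xder α₁ α₂ α₃ (X 0) = C (σ := Fin 3) (R := ℂ) α₁ * X 0 := by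
  rw [Xder_X, (lam_single α₁ α₂ α₃).1]

lemma Xder_X1 (α₁ α₂ α₃ : ℂ) :
    Xder α₁ α₂ α₃ (X 1) = C (σ := Fin 3) (R := ℂ) α₂ * X 1 := by
  rw [Xder_X, (lam_single α₁ α₂ α₃).2.1]

lemma Xder_X2 (α₁ α₂ α₃ : ℂ) :
    Xder α₁ α₂ α₃ (X 2) = C (σ := Fin 3) (R := ℂ) α₃ * X 2 := by
  rw [Xder_X, (lam_single α₁ α₂ α₃).2.2]

lemma pd_add (i : Fin 3) (f g : R3) : pd i (f + g) = pd i f + pd i g := by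
  apply MvPowerSeries.ext
  intro m
  rw [map_add, coeff_pd, coeff_pd, coeff_pd, map_add]
  ring

lemma pd_C_mul (i : Fin 3) (α : ℂ) (f : R3) :
    pd i (C (σ := Fin 3) (R := ℂ) α * f) = C (σ := Fin 3) (R := ℂ) α * pd i f := by
  apply MvPowerSeries.ext
  intro m
  rw [coeff_pd, MvPowerSeries.coeff_C_mul, MvPowerSeries.coeff_C_mul, coeff_pd]
  ring

lemma pd_zero (i : Fin 3) : pd i (0 : R3) = 0 := by
  apply MvPowerSeries.ext
  intro m
  rw [coeff_pd, map_zero, map_zero, mul_zero]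

lemma pd_X_mul_same (i : Fin 3) (f : R3) :
    pd i (X i * f) = f + X i * pd i f := by
  apply MvPowerSeries.ext
  intro m
  rw [coeff_pd, map_add, coeff_X_mul', coeff_X_mul']
  have hne : ((m + Finsupp.single i 1 : Fin 3 →₀ ℕ)) i ≠ 0 := by
    rw [Finsupp.add_apply, Finsupp.single_eq_same]; omega
  rw [if_neg hne]
  have h1 : m + Finsupp.single i 1 - Finsupp.single i 1 = m := by
    apply Finsupp.ext; intro j; rw [Finsupp.tsub_apply, Finsupp.add_apply]; omega
  rw [h1]
  rcases eq_or_ne (m i) 0 with h | h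
  · rw [if_pos h, h]; push_cast; ring
  · rw [if_neg h, coeff_pd, sub_add_single h, Finsupp.tsub_apply, Finsupp.single_eq_same]
    have h2 : ((m i - 1 : ℕ) : ℂ) + 1 = (m i : ℂ) := by
      have : 1 ≤ m i := by omega
      push_cast [Nat.cast_sub this]; ring
    rw [h2]
    ring

lemma pd_X_mul_ne (i j : Fin 3) (hij : j ≠ i) (f : R3) :
    pd i (X j * f) = X j * pd i f := by
  apply MvPowerSeries.ext
  intro m
  rw [coeff_pd, coeff_X_mul', coeff_X_mul']
  have hj : ((m + Finsupp.single i 1 : Fin 3 →₀ ℕ)) j = m j := by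
    rw [Finsupp.add_apply, Finsupp.single_eq_of_ne' (fun h => hij h.symm)]
    ring
  rw [hj]
  rcases eq_or_ne (m j) 0 with h | h
  · rw [if_pos h, if_pos h, mul_zero]
  · rw [if_neg h, if_neg h, coeff_pd]
    have h1 : ((m - Finsupp.single j 1 : Fin 3 →₀ ℕ)) i = m i := by
      rw [Finsupp.tsub_apply, Finsupp.single_eq_of_ne' hij]
      omega
    have h2 : m + Finsupp.single i 1 - Finsupp.single j 1
        = m - Finsupp.single j 1 + Finsupp.single i 1 := by
      apply Finsupp.ext
      intro t
      rw [Finsupp.tsub_apply, Finsupp.add_apply, Finsupp.add_apply, Finsupp.tsub_apply]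
      rcases eq_or_ne i t with rfl | hit
      · rw [Finsupp.single_eq_same, Finsupp.single_eq_of_ne' hij]
        omega
      · rw [Finsupp.single_eq_of_ne' hit]
        rcases eq_or_ne j t with rfl | hjt
        · rw [Finsupp.single_eq_same]; omega
        · rw [Finsupp.single_eq_of_ne' hjt]; omega
    rw [h1, h2]

section Main

variable {α₁ α₂ α₃ : ℂ}

lemma lam_inj (hres : StronglyNonResonant α₁ α₂ α₃) {m n : Fin 3 →₀ ℕ}
    (h : lam α₁ α₂ α₃ m = lam α₁ α₂ α₃ n) : m = n := by
  have key := hres ((m 0 : ℤ) - (n 0 : ℤ)) ((m 1 : ℤ) - (n 1 : ℤ)) ((m 2 : ℤ) - (n 2 : ℤ))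
    (by push_cast; rw [lam, lam] at h; linear_combination h)
  obtain ⟨k0, k1, k2⟩ := key
  exact eq3 (by omega) (by omega) (by omega)

lemma minsupp_eq (hres : StronglyNonResonant α₁ α₂ α₃) {f h : R3} {m n : Fin 3 →₀ ℕ}
    (hfm : coeff (R := ℂ) m f ≠ 0) (hhn : coeff (R := ℂ) n h ≠ 0)
    (hminf : ∀ j, coeff (R := ℂ) j f ≠ 0 → ¬ lt3 j m) (hminh : ∀ k, coeff (R := ℂ) k h ≠ 0 → ¬ lt3 k n)
    (hrel : f * Xder α₁ α₂ α₃ h = h * Xder α₁ α₂ α₃ f) : m = n := by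
  have hL : coeff (R := ℂ) (m + n) (f * Xder α₁ α₂ α₃ h)
      = coeff (R := ℂ) m f * coeff (R := ℂ) n (Xder α₁ α₂ α₃ h) := by
    apply coeff_mul_single
    intro j k hjk hj hk
    have hk' : coeff (R := ℂ) k h ≠ 0 := by
      rw [coeff_Xder] at hk
      exact right_ne_zero_of_mul hk
    exact (lt3_resolve hjk (hminf j hj) (hminh k hk')).1
  have hR : coeff (R := ℂ) (n + m) (h * Xder α₁ α₂ α₃ f)
      = coeff (R := ℂ) n h * coeff (R := ℂ) m (Xder α₁ α₂ α₃ f) := by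
    apply coeff_mul_single
    intro j k hjk hj hk
    have hk' : coeff (R := ℂ) k f ≠ 0 := by
      rw [coeff_Xder] at hk
      exact right_ne_zero_of_mul hk
    exact (lt3_resolve hjk (hminh j hj) (hminf k hk')).1
  have hrel' : coeff (R := ℂ) (m + n) (f * Xder α₁ α₂ α₃ h)
      = coeff (R := ℂ) (n + m) (h * Xder α₁ α₂ α₃ f) := by
    rw [hrel, add_comm m n]
  rw [hL, hR, coeff_Xder, coeff_Xder] at hrel'
  have hz : (lam α₁ α₂ α₃ n - lam α₁ α₂ α₃ m) * (coeff (R := ℂ) m f * coeff (R := ℂ) n h) = 0 := by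
    linear_combination hrel'
  rcases mul_eq_zero.mp hz with hz | hz
  · exact (lam_inj hres (sub_eq_zero.mp hz)).symm
  · exact absurd hz (mul_ne_zero hfm hhn)

lemma eigen_ratio (hres : StronglyNonResonant α₁ α₂ α₃) {f h : R3} (hf : f ≠ 0)
    (hrel : f * Xder α₁ α₂ α₃ h = h * Xder α₁ α₂ α₃ f) :
    ∃ κ : ℂ, h = C (σ := Fin 3) (R := ℂ) κ * f := by
  by_cases hh : h = 0
  · exact ⟨0, by rw [hh, map_zero, zero_mul]⟩
  obtain ⟨m, hmS, hmmin⟩ := exists_min3 {j | coeff (R := ℂ) j f ≠ 0} (exists_coeff_ne_zero hf)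
  obtain ⟨n, hnS, hnmin⟩ := exists_min3 {j | coeff (R := ℂ) j h ≠ 0} (exists_coeff_ne_zero hh)
  have hmn : m = n := minsupp_eq hres hmS hnS (fun j hj => hmmin j hj) (fun k hk => hnmin k hk) hrel
  subst hmn
  set κ := coeff (R := ℂ) m h / coeff (R := ℂ) m f with hκ
  refine ⟨κ, ?_⟩
  by_contra hne
  set h' := h - C (σ := Fin 3) (R := ℂ) κ * f with hh'
  have hne' : h' ≠ 0 := sub_ne_zero.mpr hne
  have hrel' : f * Xder α₁ α₂ α₃ h' = h' * Xder α₁ α₂ α₃ f := by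
    rw [hh', Xder_sub_C_mul]
    ring_nf
    linear_combination hrel
  obtain ⟨n', hn'S, hn'min⟩ := exists_min3 {j | coeff (R := ℂ) j h' ≠ 0} (exists_coeff_ne_zero hne')
  have hmn' : m = n' := minsupp_eq hres hmS hn'S (fun j hj => hmmin j hj)
    (fun k hk => hn'min k hk) hrel'
  have hzero : coeff (R := ℂ) m h' = 0 := by
    rw [hh', map_sub, MvPowerSeries.coeff_C_mul, hκ, div_mul_cancel₀ _ hmS, sub_self]
  rw [hmn'] at hzero
  exact hn'S hzero

lemma prime_X (i : Fin 3) : Prime (X i : R3) := by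
  classical
  refine ⟨?_, ?_, ?_⟩
  · intro h0
    have := congrArg (coeff (R := ℂ) (Finsupp.single i 1)) h0
    rw [MvPowerSeries.coeff_index_single_self_X, map_zero] at this
    exact one_ne_zero this
  · intro hu
    have := MvPowerSeries.isUnit_constantCoeff _ hu
    rw [MvPowerSeries.constantCoeff_X] at this
    exact (by simp : ¬ IsUnit (0 : ℂ)) this
  · intro g h hdvd
    by_contra hc
    push_neg at hc
    obtain ⟨hg, hh⟩ := hc
    rw [MvPowerSeries.X_dvd_iff] at hdvd hg hh
    push_neg at hg hh
    obtain ⟨m0, hm0i, hm0⟩ := hg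
    obtain ⟨n0, hn0i, hn0⟩ := hh
    obtain ⟨m, hmS, hmmin⟩ := exists_min3 {j | j i = 0 ∧ coeff (R := ℂ) j g ≠ 0} ⟨m0, hm0i, hm0⟩
    obtain ⟨n, hnS, hnmin⟩ := exists_min3 {k | k i = 0 ∧ coeff (R := ℂ) k h ≠ 0} ⟨n0, hn0i, hn0⟩
    have key : coeff (R := ℂ) (m + n) (g * h) = coeff (R := ℂ) m g * coeff (R := ℂ) n h := by
      apply coeff_mul_single
      intro j k hjk hgj hhk
      have hcoord : j i + k i = m i + n i := by
        rw [← Finsupp.add_apply, ← Finsupp.add_apply, hjk]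
      have hmi : m i = 0 := hmS.1
      have hni : n i = 0 := hnS.1
      have hji : j i = 0 := by omega
      have hki : k i = 0 := by omega
      exact (lt3_resolve hjk (hmmin j ⟨hji, hgj⟩) (hnmin k ⟨hki, hhk⟩)).1
    have hz := hdvd (m + n) (by rw [Finsupp.add_apply, hmS.1, hnS.1])
    rw [key] at hz
    exact (mul_ne_zero hmS.2 hnS.2) hz

lemma X_ne_zero (i : Fin 3) : (X i : R3) ≠ 0 := (prime_X i).1

lemma C_ne_zero {κ : ℂ} (hκ : κ ≠ 0) : (C (σ := Fin 3) (R := ℂ) κ : R3) ≠ 0 := by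
  intro h
  have := congrArg (constantCoeff (σ := Fin 3) (R := ℂ)) h
  rw [MvPowerSeries.constantCoeff_C, map_zero] at this
  exact hκ this

lemma isUnit_C {κ : ℂ} (hκ : κ ≠ 0) : IsUnit (C (σ := Fin 3) (R := ℂ) κ : R3) := by
  rw [MvPowerSeries.isUnit_iff_constantCoeff, MvPowerSeries.constantCoeff_C]
  exact hκ.isUnit

lemma not_X_dvd_C (i : Fin 3) {κ : ℂ} (hκ : κ ≠ 0) : ¬ (X i : R3) ∣ C (σ := Fin 3) (R := ℂ) κ := by
  rw [MvPowerSeries.X_dvd_iff]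
  push_neg
  refine ⟨0, rfl, ?_⟩
  rw [MvPowerSeries.coeff_zero_eq_constantCoeff_apply, MvPowerSeries.constantCoeff_C]
  exact hκ

lemma not_X_dvd_X {i j : Fin 3} (hji : j ≠ i) : ¬ (X i : R3) ∣ X j := by
  classical
  rw [MvPowerSeries.X_dvd_iff]
  push_neg
  refine ⟨Finsupp.single j 1, ?_, ?_⟩
  · rw [Finsupp.single_eq_of_ne' hji]
  · rw [MvPowerSeries.coeff_index_single_self_X]
    exact one_ne_zero

lemma X_dvd_aux {i j : Fin 3} (hji : j ≠ i) {κ : ℂ} (hκ : κ ≠ 0) {w u : R3}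
    (heq : X i * w = C (σ := Fin 3) (R := ℂ) κ * (X j * u)) : (X i : R3) ∣ u := by
  have hd : (X i : R3) ∣ C (σ := Fin 3) (R := ℂ) κ * (X j * u) := ⟨w, heq.symm⟩
  rcases (prime_X i).2.2 _ _ hd with h | h
  · exact absurd h (not_X_dvd_C i hκ)
  rcases (prime_X i).2.2 _ _ h with h' | h'
  · exact absurd h' (not_X_dvd_X hji)
  · exact h'

lemma dvd_Xder_eigen_mul (α₁ α₂ α₃ μ : ℂ) (t v : R3)
    (ht : Xder α₁ α₂ α₃ t = C (σ := Fin 3) (R := ℂ) μ * t) (hv : IsUnit v) :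
    (t * v) ∣ Xder α₁ α₂ α₃ (t * v) := by
  rw [Xder_mul, ht]
  apply dvd_add
  · exact mul_dvd_mul_left t (hv.dvd)
  · exact ⟨C (σ := Fin 3) (R := ℂ) μ, by ring⟩

lemma Xder_X1X2 (α₁ α₂ α₃ : ℂ) :
    Xder α₁ α₂ α₃ (X 1 * X 2) = C (σ := Fin 3) (R := ℂ) (α₂ + α₃) * (X 1 * X 2) := by
  rw [Xder_mul, Xder_X1, Xder_X2, map_add]
  ring

lemma Xder_X0X2 (α₁ α₂ α₃ : ℂ) :
    Xder α₁ α₂ α₃ (X 0 * X 2) = C (σ := Fin 3) (R := ℂ) (α₁ + α₃) * (X 0 * X 2) := by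
  rw [Xder_mul, Xder_X0, Xder_X2, map_add]
  ring

lemma Xder_X0X1 (α₁ α₂ α₃ : ℂ) :
    Xder α₁ α₂ α₃ (X 0 * X 1) = C (σ := Fin 3) (R := ℂ) (α₁ + α₂) * (X 0 * X 1) := by
  rw [Xder_mul, Xder_X0, Xder_X1, map_add]
  ring

end Main

end AuxNR

open AuxNR

theorem coefficients_divide_their_derivatives (α₁ α₂ α₃ : ℂ)
    (hres : StronglyNonResonant α₁ α₂ α₃)
    (a b c : MvPowerSeries (Fin 3) ℂ)
    (hcop : ∀ d : MvPowerSeries (Fin 3) ℂ, d ∣ a → d ∣ b → d ∣ c → IsUnit d)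
    (htan : C (σ := Fin 3) (R := ℂ) α₁ * X 0 * a + C (σ := Fin 3) (R := ℂ) α₂ * X 1 * b
        + C (σ := Fin 3) (R := ℂ) α₃ * X 2 * c = 0)
    (hint : a * (pd 1 c - pd 2 b) + b * (pd 2 a - pd 0 c)
        + c * (pd 0 b - pd 1 a) = 0) :
    a ∣ Xder α₁ α₂ α₃ a ∧ b ∣ Xder α₁ α₂ α₃ b ∧ c ∣ Xder α₁ α₂ α₃ c := by
  classical
  have hα1 : α₁ ≠ 0 := by
    intro h
    have := (hres 1 0 0 (by simp [h])).1
    norm_num at this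
  have hα2 : α₂ ≠ 0 := by
    intro h
    have := (hres 0 1 0 (by simp [h])).2.1
    norm_num at this
  have hα3 : α₃ ≠ 0 := by
    intro h
    have := (hres 0 0 1 (by simp [h])).2.2
    norm_num at this
  -- partial derivatives of the tangency relation
  have e0 : C (σ := Fin 3) (R := ℂ) α₁ * (a + X 0 * pd 0 a) + C (σ := Fin 3) (R := ℂ) α₂ * (X 1 * pd 0 b)
      + C (σ := Fin 3) (R := ℂ) α₃ * (X 2 * pd 0 c) = 0 := by
    have h := congrArg (pd 0) htan
    rwa [pd_zero, pd_add, pd_add, mul_assoc, mul_assoc, mul_assoc, pd_C_mul, pd_C_mul, pd_C_mul,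
      pd_X_mul_same, pd_X_mul_ne 0 1 (by decide), pd_X_mul_ne 0 2 (by decide)] at h
  have e1 : C (σ := Fin 3) (R := ℂ) α₁ * (X 0 * pd 1 a) + C (σ := Fin 3) (R := ℂ) α₂ * (b + X 1 * pd 1 b)
      + C (σ := Fin 3) (R := ℂ) α₃ * (X 2 * pd 1 c) = 0 := by
    have h := congrArg (pd 1) htan
    rwa [pd_zero, pd_add, pd_add, mul_assoc, mul_assoc, mul_assoc, pd_C_mul, pd_C_mul, pd_C_mul,
      pd_X_mul_same, pd_X_mul_ne 1 0 (by decide), pd_X_mul_ne 1 2 (by decide)] at h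
  have e2 : C (σ := Fin 3) (R := ℂ) α₁ * (X 0 * pd 2 a) + C (σ := Fin 3) (R := ℂ) α₂ * (X 1 * pd 2 b)
      + C (σ := Fin 3) (R := ℂ) α₃ * (c + X 2 * pd 2 c) = 0 := by
    have h := congrArg (pd 2) htan
    rwa [pd_zero, pd_add, pd_add, mul_assoc, mul_assoc, mul_assoc, pd_C_mul, pd_C_mul, pd_C_mul,
      pd_X_mul_same, pd_X_mul_ne 2 0 (by decide), pd_X_mul_ne 2 1 (by decide)] at h
  -- the "Wronskian" relations
  have T12 : a * Xder α₁ α₂ α₃ b - b * Xder α₁ α₂ α₃ a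
      = (C (σ := Fin 3) (R := ℂ) α₁ - C (σ := Fin 3) (R := ℂ) α₂) * (a * b) := by
    simp only [Xder]
    linear_combination (-b) * e0 + a * e1 + (-(C (σ := Fin 3) (R := ℂ) α₃ * X 2)) * hint
      + (pd 0 b - pd 1 a) * htan
  have T13 : a * Xder α₁ α₂ α₃ c - c * Xder α₁ α₂ α₃ a
      = (C (σ := Fin 3) (R := ℂ) α₁ - C (σ := Fin 3) (R := ℂ) α₃) * (a * c) := by
    simp only [Xder]
    linear_combination (-c) * e0 + a * e2 + (C (σ := Fin 3) (R := ℂ) α₂ * X 1) * hint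
      + (pd 0 c - pd 2 a) * htan
  have T23 : b * Xder α₁ α₂ α₃ c - c * Xder α₁ α₂ α₃ b
      = (C (σ := Fin 3) (R := ℂ) α₂ - C (σ := Fin 3) (R := ℂ) α₃) * (b * c) := by
    simp only [Xder]
    linear_combination (-c) * e1 + b * e2 + (-(C (σ := Fin 3) (R := ℂ) α₁ * X 0)) * hint
      + (pd 1 c - pd 2 b) * htan
  have R12 : (X 0 * a) * Xder α₁ α₂ α₃ (X 1 * b) = (X 1 * b) * Xder α₁ α₂ α₃ (X 0 * a) := by
    rw [Xder_mul, Xder_mul, Xder_X0, Xder_X1]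
    linear_combination (X 0 * X 1) * T12
  have R13 : (X 0 * a) * Xder α₁ α₂ α₃ (X 2 * c) = (X 2 * c) * Xder α₁ α₂ α₃ (X 0 * a) := by
    rw [Xder_mul, Xder_mul, Xder_X0, Xder_X2]
    linear_combination (X 0 * X 2) * T13
  have R23 : (X 1 * b) * Xder α₁ α₂ α₃ (X 2 * c) = (X 2 * c) * Xder α₁ α₂ α₃ (X 1 * b) := by
    rw [Xder_mul, Xder_mul, Xder_X1, Xder_X2]
    linear_combination (X 1 * X 2) * T23
  by_cases ha : a = 0
  · by_cases hb : b = 0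
    · exfalso
      have h3 : C (σ := Fin 3) (R := ℂ) α₃ * (X 2 * c) = 0 := by
        rw [ha, hb] at htan
        linear_combination htan
      have hc0 : c = 0 := by
        rcases mul_eq_zero.mp h3 with h | h
        · exact absurd h (C_ne_zero hα3)
        rcases mul_eq_zero.mp h with h' | h'
        · exact absurd h' (X_ne_zero 2)
        · exact h'
      exact (prime_X 0).2.1 (hcop (X 0) (by rw [ha]; exact dvd_zero _)
        (by rw [hb]; exact dvd_zero _) (by rw [hc0]; exact dvd_zero _))
    · by_cases hc : c = 0
      · exfalso
        have h2 : C (σ := Fin 3) (R := ℂ) α₂ * (X 1 * b) = 0 := by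
          rw [ha, hc] at htan
          linear_combination htan
        rcases mul_eq_zero.mp h2 with h | h
        · exact absurd h (C_ne_zero hα2)
        rcases mul_eq_zero.mp h with h' | h'
        · exact absurd h' (X_ne_zero 1)
        · exact hb h'
      · -- a = 0, b ≠ 0, c ≠ 0
        have hf2 : (X 1 * b : MvPowerSeries (Fin 3) ℂ) ≠ 0 := mul_ne_zero (X_ne_zero 1) hb
        obtain ⟨κ, hκeq⟩ := eigen_ratio hres hf2 R23
        have hκ0 : κ ≠ 0 := by
          intro h0
          rw [h0, map_zero, zero_mul] at hκeq
          exact mul_ne_zero (X_ne_zero 2) hc hκeq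
        obtain ⟨b', rfl⟩ : (X 2 : MvPowerSeries (Fin 3) ℂ) ∣ b :=
          X_dvd_aux (by decide) hκ0 hκeq
        have hc' : c = C (σ := Fin 3) (R := ℂ) κ * (X 1 * b') :=
          mul_left_cancel₀ (X_ne_zero 2) (by linear_combination hκeq)
        have hb'u : IsUnit b' := hcop b' (by rw [ha]; exact dvd_zero _)
          ⟨X 2, by ring⟩ (by rw [hc']; exact ⟨C (σ := Fin 3) (R := ℂ) κ * X 1, by ring⟩)
        refine ⟨by rw [ha, Xder_zero], ?_, ?_⟩
        · exact dvd_Xder_eigen_mul α₁ α₂ α₃ α₃ (X 2) b' (Xder_X2 α₁ α₂ α₃) hb'u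
        · rw [hc', show C (σ := Fin 3) (R := ℂ) κ * (X 1 * b') = X 1 * (C (σ := Fin 3) (R := ℂ) κ * b') by ring]
          exact dvd_Xder_eigen_mul α₁ α₂ α₃ α₂ (X 1) (C (σ := Fin 3) (R := ℂ) κ * b')
            (Xder_X1 α₁ α₂ α₃) ((isUnit_C hκ0).mul hb'u)
  · have hf1 : (X 0 * a : MvPowerSeries (Fin 3) ℂ) ≠ 0 := mul_ne_zero (X_ne_zero 0) ha
    by_cases hb : b = 0
    · by_cases hc : c = 0
      · exfalso
        have h1 : C (σ := Fin 3) (R := ℂ) α₁ * (X 0 * a) = 0 := by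
          rw [hb, hc] at htan
          linear_combination htan
        rcases mul_eq_zero.mp h1 with h | h
        · exact absurd h (C_ne_zero hα1)
        · exact hf1 h
      · -- b = 0, a ≠ 0, c ≠ 0
        obtain ⟨κ, hκeq⟩ := eigen_ratio hres hf1 R13
        have hκ0 : κ ≠ 0 := by
          intro h0
          rw [h0, map_zero, zero_mul] at hκeq
          exact mul_ne_zero (X_ne_zero 2) hc hκeq
        obtain ⟨a', rfl⟩ : (X 2 : MvPowerSeries (Fin 3) ℂ) ∣ a :=
          X_dvd_aux (by decide) hκ0 hκeq
        have hc' : c = C (σ := Fin 3) (R := ℂ) κ * (X 0 * a') :=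
          mul_left_cancel₀ (X_ne_zero 2) (by linear_combination hκeq)
        have ha'u : IsUnit a' := hcop a' ⟨X 2, by ring⟩ (by rw [hb]; exact dvd_zero _)
          (by rw [hc']; exact ⟨C (σ := Fin 3) (R := ℂ) κ * X 0, by ring⟩)
        refine ⟨?_, by rw [hb, Xder_zero], ?_⟩
        · exact dvd_Xder_eigen_mul α₁ α₂ α₃ α₃ (X 2) a' (Xder_X2 α₁ α₂ α₃) ha'u
        · rw [hc', show C (σ := Fin 3) (R := ℂ) κ * (X 0 * a') = X 0 * (C (σ := Fin 3) (R := ℂ) κ * a') by ring]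
          exact dvd_Xder_eigen_mul α₁ α₂ α₃ α₁ (X 0) (C (σ := Fin 3) (R := ℂ) κ * a')
            (Xder_X0 α₁ α₂ α₃) ((isUnit_C hκ0).mul ha'u)
    · by_cases hc : c = 0
      · -- c = 0, a ≠ 0, b ≠ 0
        obtain ⟨κ, hκeq⟩ := eigen_ratio hres hf1 R12
        have hκ0 : κ ≠ 0 := by
          intro h0
          rw [h0, map_zero, zero_mul] at hκeq
          exact mul_ne_zero (X_ne_zero 1) hb hκeq
        obtain ⟨a', rfl⟩ : (X 1 : MvPowerSeries (Fin 3) ℂ) ∣ a :=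
          X_dvd_aux (by decide) hκ0 hκeq
        have hb' : b = C (σ := Fin 3) (R := ℂ) κ * (X 0 * a') :=
          mul_left_cancel₀ (X_ne_zero 1) (by linear_combination hκeq)
        have ha'u : IsUnit a' := hcop a' ⟨X 1, by ring⟩
          (by rw [hb']; exact ⟨C (σ := Fin 3) (R := ℂ) κ * X 0, by ring⟩) (by rw [hc]; exact dvd_zero _)
        refine ⟨?_, ?_, by rw [hc, Xder_zero]⟩
        · exact dvd_Xder_eigen_mul α₁ α₂ α₃ α₂ (X 1) a' (Xder_X1 α₁ α₂ α₃) ha'u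
        · rw [hb', show C (σ := Fin 3) (R := ℂ) κ * (X 0 * a') = X 0 * (C (σ := Fin 3) (R := ℂ) κ * a') by ring]
          exact dvd_Xder_eigen_mul α₁ α₂ α₃ α₁ (X 0) (C (σ := Fin 3) (R := ℂ) κ * a')
            (Xder_X0 α₁ α₂ α₃) ((isUnit_C hκ0).mul ha'u)
      · -- all nonzero
        obtain ⟨κ₂, h2⟩ := eigen_ratio hres hf1 R12
        obtain ⟨κ₃, h3⟩ := eigen_ratio hres hf1 R13
        have hκ2 : κ₂ ≠ 0 := by
          intro h0
          rw [h0, map_zero, zero_mul] at h2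
          exact mul_ne_zero (X_ne_zero 1) hb h2
        have hκ3 : κ₃ ≠ 0 := by
          intro h0
          rw [h0, map_zero, zero_mul] at h3
          exact mul_ne_zero (X_ne_zero 2) hc h3
        obtain ⟨a₁, rfl⟩ : (X 1 : MvPowerSeries (Fin 3) ℂ) ∣ a :=
          X_dvd_aux (by decide) hκ2 h2
        have hd2 : (X 2 : MvPowerSeries (Fin 3) ℂ) ∣ X 1 * a₁ :=
          X_dvd_aux (by decide) hκ3 h3
        obtain ⟨a', rfl⟩ : (X 2 : MvPowerSeries (Fin 3) ℂ) ∣ a₁ := by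
          rcases (prime_X 2).2.2 _ _ hd2 with h | h
          · exact absurd h (not_X_dvd_X (by decide))
          · exact h
        have hb' : b = C (σ := Fin 3) (R := ℂ) κ₂ * (X 0 * (X 2 * a')) :=
          mul_left_cancel₀ (X_ne_zero 1) (by linear_combination h2)
        have hc' : c = C (σ := Fin 3) (R := ℂ) κ₃ * (X 0 * (X 1 * a')) :=
          mul_left_cancel₀ (X_ne_zero 2) (by linear_combination h3)
        have ha'u : IsUnit a' := hcop a' ⟨X 1 * X 2, by ring⟩
          (by rw [hb']; exact ⟨C (σ := Fin 3) (R := ℂ) κ₂ * (X 0 * X 2), by ring⟩)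
          (by rw [hc']; exact ⟨C (σ := Fin 3) (R := ℂ) κ₃ * (X 0 * X 1), by ring⟩)
        refine ⟨?_, ?_, ?_⟩
        · rw [show (X 1 * (X 2 * a') : MvPowerSeries (Fin 3) ℂ) = (X 1 * X 2) * a' by ring]
          exact dvd_Xder_eigen_mul α₁ α₂ α₃ (α₂ + α₃) (X 1 * X 2) a'
            (Xder_X1X2 α₁ α₂ α₃) ha'u
        · rw [hb', show C (σ := Fin 3) (R := ℂ) κ₂ * (X 0 * (X 2 * a'))
            = (X 0 * X 2) * (C (σ := Fin 3) (R := ℂ) κ₂ * a') by ring]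
          exact dvd_Xder_eigen_mul α₁ α₂ α₃ (α₁ + α₃) (X 0 * X 2) (C (σ := Fin 3) (R := ℂ) κ₂ * a')
            (Xder_X0X2 α₁ α₂ α₃) ((isUnit_C hκ2).mul ha'u)
        · rw [hc', show C (σ := Fin 3) (R := ℂ) κ₃ * (X 0 * (X 1 * a'))
            = (X 0 * X 1) * (C (σ := Fin 3) (R := ℂ) κ₃ * a') by ring]
          exact dvd_Xder_eigen_mul α₁ α₂ α₃ (α₁ + α₂) (X 0 * X 1) (C (σ := Fin 3) (R := ℂ) κ₃ * a')
            (Xder_X0X1 α₁ α₂ α₃) ((isUnit_C hκ3).mul ha'u)
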